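/- Let (X, ◃) be a finite rack with orbits O_1, …, O_k, orbit representatives x_1, …, x_k, and for each i let D_i be the minimal integer D ≥ 2 with ρ_{x_i}^D = id. Then the subgroup Z of the structure group G generated by x_1^{D_1}, …, x_k^{D_k} is central and free abelian of rank k, and the quotient G/Z is a finite group. -/

import Mathlib

/-- The defining relations of the structure group of a rack:
`x y = y (x ◃ y)` for all `x, y`. -/
def rackRels {X : Type*} (op : X → X → X) : Set (FreeGroup X) :=
  {w | ∃ x y, w = FreeGroup.of x * FreeGroup.of y *
    (FreeGroup.of y * FreeGroup.of (op x y))⁻¹}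

/-- The structure group of a rack `(X, ◃)`. -/
abbrev RackGroup {X : Type*} (op : X → X → X) : Type _ :=
  PresentedGroup (rackRels op)

/-- The orbit equivalence of a rack: generated by `x ∼ x ◃ y`. -/
def rackOrbitSetoid {X : Type*} (op : X → X → X) : Setoid X :=
  Relation.EqvGen.setoid (fun a b => ∃ y, b = op a y)

namespace RackAux

variable {X : Type*} (op : X → X → X)

/-- generators -/
noncomputable abbrev ee (x : X) : RackGroup op := PresentedGroup.of x

theorem ee_rel (x y : X) : ee op x * ee op y = ee op y * ee op (op x y) := by
  have hmem : (FreeGroup.of x * FreeGroup.of y *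
      (FreeGroup.of y * FreeGroup.of (op x y))⁻¹) ∈ rackRels op := ⟨x, y, rfl⟩
  have h1 : (QuotientGroup.mk (FreeGroup.of x * FreeGroup.of y *
      (FreeGroup.of y * FreeGroup.of (op x y))⁻¹) : RackGroup op) = 1 := by
    rw [QuotientGroup.eq_one_iff]
    exact Subgroup.subset_normalClosure hmem
  have h2 : (ee op x * ee op y) * (ee op y * ee op (op x y))⁻¹ = 1 := h1
  rw [mul_inv_eq_one] at h2
  exact h2

theorem closure_ee : Subgroup.closure (Set.range (ee op)) = ⊤ :=
  PresentedGroup.closure_range_of _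

theorem mem_center_of {g : RackGroup op} (h : ∀ x, g * ee op x = ee op x * g) :
    g ∈ Subgroup.center (RackGroup op) := by
  rw [Subgroup.mem_center_iff]
  intro h'
  have h'mem : h' ∈ Subgroup.closure (Set.range (ee op)) := by
    rw [closure_ee]; trivial
  induction h'mem using Subgroup.closure_induction with
  | mem a ha => obtain ⟨x, rfl⟩ := ha; exact (h x).symm
  | one => simp
  | mul a b _ _ ha hb => rw [mul_assoc, hb, ← mul_assoc, ha, mul_assoc]
  | inv a _ ha => 
      calc a⁻¹ * g = a⁻¹ * g * a * a⁻¹ := by group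
        _ = a⁻¹ * (a * g) * a⁻¹ := by rw [ha]; group
        _ = g * a⁻¹ := by group

end RackAux

section
variable {X : Type*} (op : X → X → X)
  (hbij : ∀ y, Function.Bijective (fun x => op x y))
  (hsd : ∀ x y z, op (op x y) z = op (op x z) (op y z))

open RackAux

/-- the right translation as a permutation -/
noncomputable def rho (y : X) : Equiv.Perm X := Equiv.ofBijective _ (hbij y)

@[simp] theorem rho_apply (y t : X) : rho op hbij y t = op t y := rfl

include hsd

/-- the permutation representation of the structure group -/
noncomputable def piRep : RackGroup op →* (Equiv.Perm X)ᵐᵒᵖ :=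
  PresentedGroup.toGroup (f := fun x => MulOpposite.op (rho op hbij x)) (by
    rintro r ⟨x, y, rfl⟩
    simp only [map_mul, map_inv, FreeGroup.lift_apply_of]
    rw [mul_inv_eq_one, ← MulOpposite.op_mul, ← MulOpposite.op_mul]
    congr 1
    ext t
    simp only [Equiv.Perm.mul_apply, rho_apply]
    exact hsd t x y)

@[simp] theorem piRep_of (x : X) :
    piRep op hbij hsd (ee op x) = MulOpposite.op (rho op hbij x) :=
  PresentedGroup.toGroup.of _

theorem conj_ee (g : RackGroup op) (t : X) :
    g⁻¹ * ee op t * g = ee op ((piRep op hbij hsd g).unop t) := by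
  have hg : g ∈ Subgroup.closure (Set.range (ee op)) := by rw [closure_ee]; trivial
  induction hg using Subgroup.closure_induction generalizing t with
  | mem a ha =>
      obtain ⟨y, rfl⟩ := ha
      simp only [piRep_of, MulOpposite.unop_op, rho_apply]
      rw [eq_comm, ← mul_left_cancel_iff (a := ee op y), ← mul_assoc, ← mul_assoc,
        mul_inv_cancel, one_mul]
      exact (ee_rel op t y).symm
  | one => simp
  | mul a b ha hb iha ihb =>
      have h3 : (a*b)⁻¹ * ee op t * (a*b) = b⁻¹ * (a⁻¹ * ee op t * a) * b := by group
      rw [h3, iha, ihb]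
      simp [map_mul]
  | inv a ha iha =>
      set s := (piRep op hbij hsd a⁻¹).unop t with hs
      have h2 : (piRep op hbij hsd a).unop s = t := by
        rw [hs]; simp [map_inv]
      have h4 := iha s
      rw [h2] at h4
      rw [← h4]; group

theorem ker_piRep_le_center :
    (piRep op hbij hsd).ker ≤ Subgroup.center (RackGroup op) := by
  intro g hg
  apply mem_center_of
  intro x
  have h5 := conj_ee op hbij hsd g x
  rw [MonoidHom.mem_ker.mp hg] at h5
  simp only [MulOpposite.unop_one, Equiv.Perm.coe_one, id_eq] at h5
  have h6 : g * (g⁻¹ * ee op x * g) = ee op x * g := by group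
  rw [h5] at h6
  exact h6

end
section
variable {X : Type*} (op : X → X → X)

open RackAux

/-- the degree homomorphism to the free abelian group on the orbits -/
noncomputable def theta :
    RackGroup op →* Multiplicative (Quotient (rackOrbitSetoid op) →₀ ℤ) :=
  PresentedGroup.toGroup
    (f := fun x => Multiplicative.ofAdd
      (Finsupp.single (Quotient.mk (rackOrbitSetoid op) x) (1 : ℤ))) (by
    rintro r ⟨x, y, rfl⟩
    simp only [map_mul, map_inv, FreeGroup.lift_apply_of]
    rw [mul_inv_eq_one]
    have horb : Quotient.mk (rackOrbitSetoid op) x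
        = Quotient.mk (rackOrbitSetoid op) (op x y) :=
      Quotient.sound (Relation.EqvGen.rel _ _ ⟨y, rfl⟩)
    rw [horb, mul_comm])

@[simp] theorem theta_of (x : X) :
    theta op (ee op x) = Multiplicative.ofAdd
      (Finsupp.single (Quotient.mk (rackOrbitSetoid op) x) (1 : ℤ)) :=
  PresentedGroup.toGroup.of _

theorem conj_of_orbit {x z : X} (h : (rackOrbitSetoid op).r x z) :
    ∃ g : RackGroup op, g⁻¹ * ee op x * g = ee op z := by
  induction h with
  | rel a b hab =>
      obtain ⟨y, rfl⟩ := hab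
      refine ⟨ee op y, ?_⟩
      rw [mul_assoc, ee_rel op a y]
      group
  | refl a => exact ⟨1, by group⟩
  | symm a b hab ih =>
      obtain ⟨g, hg⟩ := ih
      exact ⟨g⁻¹, by rw [← hg]; group⟩
  | trans a b c hab hbc ih1 ih2 =>
      obtain ⟨g, hg⟩ := ih1
      obtain ⟨g', hg'⟩ := ih2
      refine ⟨g * g', ?_⟩
      rw [← hg', ← hg]; group

variable (hbij : ∀ y, Function.Bijective (fun x => op x y))
  (hsd : ∀ x y z, op (op x y) z = op (op x z) (op y z))

theorem rho_pow_apply (y : X) (n : ℕ) (t : X) :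
    (rho op hbij y ^ n) t = (fun s => op s y)^[n] t := by
  induction n generalizing t with
  | zero => simp
  | succ n ih =>
      rw [pow_succ', Function.iterate_succ_apply']
      simp only [Equiv.Perm.mul_apply, rho_apply]
      rw [ih t]

include hsd in
theorem pow_mem_ker {y : X} {N : ℕ} (hN : (fun s => op s y)^[N] = id) :
    ee op y ^ N ∈ (piRep op hbij hsd).ker := by
  rw [MonoidHom.mem_ker, map_pow, piRep_of, ← MulOpposite.op_pow,
    ← MulOpposite.op_one]
  congr 1
  ext t
  rw [rho_pow_apply, hN]
  rfl

end
section
variable {X : Type*} (op : X → X → X)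

open RackAux

/-- build a hom out of the free abelian group on orbits -/
noncomputable def fromFreeAb {H : Type*} [CommGroup H]
    (a : Quotient (rackOrbitSetoid op) → H) :
    Multiplicative (Quotient (rackOrbitSetoid op) →₀ ℤ) →* H :=
  AddMonoidHom.toMultiplicativeLeft
    (Finsupp.liftAddHom (fun o => zmultiplesHom (Additive H) (Additive.ofMul (a o))))

@[simp] theorem fromFreeAb_single {H : Type*} [CommGroup H]
    (a : Quotient (rackOrbitSetoid op) → H) (o : Quotient (rackOrbitSetoid op)) (n : ℤ) :
    fromFreeAb op a (Multiplicative.ofAdd (Finsupp.single o n)) = a o ^ n := by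
  simp [fromFreeAb, Finsupp.liftAddHom_apply_single]

end
section
variable {X : Type*} (op : X → X → X)
  (xs : Quotient (rackOrbitSetoid op) → X)
  (D : Quotient (rackOrbitSetoid op) → ℕ)

open RackAux

/-- the central generators -/
noncomputable def go (o : Quotient (rackOrbitSetoid op)) : RackGroup op :=
  ee op (xs o) ^ D o

variable (hc : ∀ o, go op xs D o ∈ Subgroup.center (RackGroup op))

open scoped IsMulCommutative in
/-- the homomorphism from the free abelian group on orbits onto `Z` -/
noncomputable def psi :
    Multiplicative (Quotient (rackOrbitSetoid op) →₀ ℤ) →* RackGroup op :=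
  ((Subgroup.center (RackGroup op)).subtype).comp
    (fromFreeAb op (fun o => (⟨go op xs D o, hc o⟩ : Subgroup.center (RackGroup op))))

@[simp] theorem psi_single (o : Quotient (rackOrbitSetoid op)) (n : ℤ) :
    psi op xs D hc (Multiplicative.ofAdd (Finsupp.single o n)) = go op xs D o ^ n := by
  simp [psi]

variable (hxs : ∀ o, Quotient.mk (rackOrbitSetoid op) (xs o) = o)

include hxs in
theorem theta_go (o : Quotient (rackOrbitSetoid op)) :
    theta op (go op xs D o)
      = Multiplicative.ofAdd (Finsupp.single o (D o : ℤ)) := by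
  rw [go, map_pow, theta_of, hxs o, ← ofAdd_nsmul, Finsupp.smul_single]
  norm_num

include hxs in
theorem theta_psi (f : Quotient (rackOrbitSetoid op) →₀ ℤ)
    (p : Quotient (rackOrbitSetoid op)) :
    Multiplicative.toAdd (theta op (psi op xs D hc (Multiplicative.ofAdd f))) p
      = f p * D p := by
  classical
  induction f using Finsupp.induction_linear with
  | zero => simp
  | add f g hf hg =>
      rw [ofAdd_add, map_mul, map_mul, toAdd_mul, Finsupp.add_apply,
        Finsupp.add_apply, hf, hg, add_mul]
  | single o n =>
      rw [psi_single, map_zpow, theta_go op xs D hxs o, ← ofAdd_zsmul,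
        toAdd_ofAdd, Finsupp.smul_single, smul_eq_mul, Finsupp.single_apply,
        Finsupp.single_apply]
      rcases eq_or_ne o p with rfl | h
      · simp [mul_comm]
      · simp [h]

variable (hDpos : ∀ o, D o ≠ 0)

include hxs hDpos in
theorem psi_injective : Function.Injective (psi op xs D hc) := by
  intro a b hab
  have h1 : ∀ p, Multiplicative.toAdd a p * D p = Multiplicative.toAdd b p * D p := by
    intro p
    rw [← theta_psi op xs D hc hxs _ p, ← theta_psi op xs D hc hxs _ p]
    simp [hab]
  have h2 : Multiplicative.toAdd a = Multiplicative.toAdd b := by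
    ext p
    have := h1 p
    exact mul_right_cancel₀ (by exact_mod_cast hDpos p) this
  exact Multiplicative.toAdd.injective h2

theorem psi_range :
    (psi op xs D hc).range
      = Subgroup.closure {g | ∃ o, g = ee op (xs o) ^ D o} := by
  apply le_antisymm
  · rintro g ⟨f, rfl⟩
    have key : ∀ f' : Quotient (rackOrbitSetoid op) →₀ ℤ,
        psi op xs D hc (Multiplicative.ofAdd f')
          ∈ Subgroup.closure {g | ∃ o, g = ee op (xs o) ^ D o} := by
      intro f'
      induction f' using Finsupp.induction_linear with
      | zero => simpa using Subgroup.one_mem _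
      | add u v hu hv => rw [ofAdd_add, map_mul]; exact mul_mem hu hv
      | single o n =>
          rw [psi_single]
          have hmem : go op xs D o ∈ {g | ∃ o', g = ee op (xs o') ^ D o'} := ⟨o, rfl⟩
          exact zpow_mem (Subgroup.subset_closure hmem) n
    exact key (Multiplicative.toAdd f)
  · rw [Subgroup.closure_le]
    rintro g ⟨o, rfl⟩
    exact MonoidHom.mem_range.mpr ⟨Multiplicative.ofAdd (Finsupp.single o 1), by simp [go]⟩

end
section
variable {X : Type*} (op : X → X → X)
  (xs : Quotient (rackOrbitSetoid op) → X)
  (hxs : ∀ o, Quotient.mk (rackOrbitSetoid op) (xs o) = o)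

open RackAux

/-- section of the degree map into the abelianization -/
noncomputable def muAb :
    Multiplicative (Quotient (rackOrbitSetoid op) →₀ ℤ) →* Abelianization (RackGroup op) :=
  fromFreeAb op (fun o => Abelianization.of (ee op (xs o)))

include hxs in
theorem muAb_theta : (muAb op xs).comp (theta op) = Abelianization.of := by
  apply PresentedGroup.ext
  intro x
  have h1 : (rackOrbitSetoid op).r (xs (Quotient.mk (rackOrbitSetoid op) x)) x :=
    Quotient.exact (by rw [hxs])
  obtain ⟨g, hg⟩ := conj_of_orbit op h1
  have h2 : Abelianization.of (ee op (xs (Quotient.mk (rackOrbitSetoid op) x)))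
      = Abelianization.of (ee op x) := by
    rw [← hg]
    simp only [map_mul, map_inv]
    rw [mul_comm, ← mul_assoc]
    simp
  simp only [MonoidHom.comp_apply]
  rw [theta_of, muAb]
  have h3 := fromFreeAb_single op
    (fun o => Abelianization.of (ee op (xs o))) (Quotient.mk (rackOrbitSetoid op) x) 1
  rw [h3, zpow_one, h2]

include hxs in
theorem ker_theta_le_commutator :
    (theta op).ker ≤ commutator (RackGroup op) := by
  intro g hg
  have h1 : Abelianization.of g = 1 := by
    rw [← muAb_theta op xs hxs]
    simp only [MonoidHom.comp_apply]
    rw [MonoidHom.mem_ker.mp hg, map_one]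
  exact (QuotientGroup.eq_one_iff g).mp h1

end
section
variable {G : Type*} [Group G]
open scoped commutatorElement

theorem commutator_center_shift (a b z w : G)
    (hz : z ∈ Subgroup.center G) (hw : w ∈ Subgroup.center G) :
    ⁅a * z, b * w⁆ = ⁅a, b⁆ := by
  have hz' := Subgroup.mem_center_iff.mp hz
  have hw' := Subgroup.mem_center_iff.mp hw
  have c0z : ∀ g : G, z * g * z⁻¹ = g := fun g => by rw [← hz' g]; group
  have c0w : ∀ g : G, w * g * w⁻¹ = g := fun g => by rw [← hw' g]; group
  have cw1 : ∀ u g : G, (u * w) * g * (u * w)⁻¹ = u * g * u⁻¹ := by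
    intro u g
    have h : (u * w) * g * (u * w)⁻¹ = u * (w * g * w⁻¹) * u⁻¹ := by group
    rw [h, c0w]
  have sz : ∀ g r : G, z * (g * (z⁻¹ * r)) = g * r := by
    intro g r
    have h : z * (g * (z⁻¹ * r)) = (z * g * z⁻¹) * r := by group
    rw [h, c0z]
  calc ⁅a * z, b * w⁆
      = (a * z) * ((b * w) * (a * z)⁻¹ * (b * w)⁻¹) := by
        rw [commutatorElement_def]; group
    _ = (a * z) * (b * (a * z)⁻¹ * b⁻¹) := by rw [cw1 b ((a * z)⁻¹)]
    _ = a * (z * (b * (z⁻¹ * (a⁻¹ * b⁻¹)))) := by group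
    _ = a * (b * (a⁻¹ * b⁻¹)) := by rw [sz]
    _ = ⁅a, b⁆ := by rw [commutatorElement_def]; group

theorem finite_commutatorSet_of_finite_quotient_center
    [Finite (G ⧸ Subgroup.center G)] : Finite (commutatorSet G) := by
  have hsub : commutatorSet G ⊆ Set.range
      (fun p : (G ⧸ Subgroup.center G) × (G ⧸ Subgroup.center G) =>
        ⁅p.1.out, p.2.out⁆) := by
    rintro g ⟨a, b, rfl⟩
    refine ⟨(QuotientGroup.mk a, QuotientGroup.mk b), ?_⟩
    have ha : a⁻¹ * (QuotientGroup.mk a : G ⧸ Subgroup.center G).out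
        ∈ Subgroup.center G := by
      rw [← QuotientGroup.eq]
      exact (Quotient.out_eq _).symm
    have hb : b⁻¹ * (QuotientGroup.mk b : G ⧸ Subgroup.center G).out
        ∈ Subgroup.center G := by
      rw [← QuotientGroup.eq]
      exact (Quotient.out_eq _).symm
    have h1 : (QuotientGroup.mk a : G ⧸ Subgroup.center G).out
        = a * (a⁻¹ * (QuotientGroup.mk a : G ⧸ Subgroup.center G).out) := by group
    have h2 : (QuotientGroup.mk b : G ⧸ Subgroup.center G).out
        = b * (b⁻¹ * (QuotientGroup.mk b : G ⧸ Subgroup.center G).out) := by group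
    simp only
    rw [h1, h2, commutator_center_shift a b _ _ ha hb]
  have : (Set.range
      (fun p : (G ⧸ Subgroup.center G) × (G ⧸ Subgroup.center G) =>
        ⁅p.1.out, p.2.out⁆)).Finite := Set.finite_range _
  exact (this.subset hsub).to_subtype

end
section
variable {X : Type*} (op : X → X → X)
  (D : Quotient (rackOrbitSetoid op) → ℕ)

open RackAux

/-- the subgroup of multiples `D o · e_o` of the free abelian group -/
noncomputable def BSub : Subgroup (Multiplicative (Quotient (rackOrbitSetoid op) →₀ ℤ)) :=
  Subgroup.closure
    (Set.range fun o => Multiplicative.ofAdd (Finsupp.single o (D o : ℤ)))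

/-- reduction mod `D` -/
noncomputable def betaHom :
    Multiplicative (Quotient (rackOrbitSetoid op) →₀ ℤ)
      →* Multiplicative (∀ o : Quotient (rackOrbitSetoid op), ZMod (D o)) :=
  AddMonoidHom.toMultiplicative
    { toFun := fun f o => ((f o : ℤ) : ZMod (D o))
      map_zero' := by ext o; simp
      map_add' := by intro f g; ext o; simp }

theorem BSub_eq_ker : BSub op D = (betaHom op D).ker := by
  apply le_antisymm
  · rw [BSub, Subgroup.closure_le]
    rintro g ⟨o, rfl⟩
    rw [SetLike.mem_coe, MonoidHom.mem_ker]
    have h1 : (betaHom op D) (Multiplicative.ofAdd (Finsupp.single o (D o : ℤ)))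
        = Multiplicative.ofAdd (fun p => ((Finsupp.single o (D o : ℤ) p : ℤ) : ZMod (D p))) := rfl
    rw [h1]
    have h2 : (fun p => ((Finsupp.single o (D o : ℤ) p : ℤ) : ZMod (D p)))
        = (0 : ∀ p : Quotient (rackOrbitSetoid op), ZMod (D p)) := by
      funext p
      classical
      rcases eq_or_ne o p with rfl | h
      · simp [Finsupp.single_apply]
      · simp [Finsupp.single_apply, h]
    rw [h2]
    rfl
  · intro g hg
    rw [MonoidHom.mem_ker] at hg
    have hdvd : ∀ o, (D o : ℤ) ∣ Multiplicative.toAdd g o := by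
      intro o
      have h3 : ((Multiplicative.toAdd g o : ℤ) : ZMod (D o)) = 0 := by
        have := congrFun (congrArg Multiplicative.toAdd hg) o
        exact this
      exact (ZMod.intCast_zmod_eq_zero_iff_dvd _ _).mp h3
    classical
    have key : ∀ f : Quotient (rackOrbitSetoid op) →₀ ℤ,
        (∀ o, (D o : ℤ) ∣ f o) → Multiplicative.ofAdd f ∈ BSub op D := by
      intro f
      induction f using Finsupp.induction with
      | zero => intro _; simpa using Subgroup.one_mem _
      | single_add a b f' ha' hb ih =>
          intro hdv
          have hfa : f' a = 0 := Finsupp.notMem_support_iff.mp ha'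
          have hdvf' : ∀ o, (D o : ℤ) ∣ f' o := by
            intro o
            rcases eq_or_ne o a with rfl | h
            · rw [hfa]; exact dvd_zero _
            · have := hdv o
              rwa [Finsupp.add_apply, Finsupp.single_apply, if_neg (by
                intro hh; exact h (hh.symm)), zero_add] at this
          have hdb : (D a : ℤ) ∣ b := by
            have := hdv a
            rwa [Finsupp.add_apply, Finsupp.single_apply, if_pos rfl, hfa, add_zero] at this
          obtain ⟨c, rfl⟩ := hdb
          rw [ofAdd_add, mul_comm]
          refine mul_mem (ih hdvf') ?_
          have h5 : Finsupp.single a ((D a : ℤ) * c) = c • Finsupp.single a (D a : ℤ) := by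
            rw [Finsupp.smul_single, smul_eq_mul, mul_comm]
          rw [h5, ofAdd_zsmul]
          have hgen : Multiplicative.ofAdd (Finsupp.single a (D a : ℤ)) ∈ BSub op D :=
            Subgroup.subset_closure ⟨a, rfl⟩
          exact zpow_mem hgen c
    have := key (Multiplicative.toAdd g) hdvd
    simpa using this

theorem finite_quotient_BSub [Finite X] (hD2 : ∀ o, 2 ≤ D o) :
    Finite (Multiplicative (Quotient (rackOrbitSetoid op) →₀ ℤ) ⧸ BSub op D) := by
  haveI : ∀ o, NeZero (D o) := fun o => ⟨by have := hD2 o; omega⟩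
  haveI : Finite (Quotient (rackOrbitSetoid op)) :=
    Finite.of_surjective (Quotient.mk (rackOrbitSetoid op)) Quotient.mk_surjective
  haveI : Finite (Multiplicative (∀ o : Quotient (rackOrbitSetoid op), ZMod (D o))) := by
    have : Finite (∀ o : Quotient (rackOrbitSetoid op), ZMod (D o)) := by infer_instance
    exact this
  have e0 := QuotientGroup.quotientMulEquivOfEq (BSub_eq_ker op D)
  have hinj := QuotientGroup.kerLift_injective (betaHom op D)
  exact Finite.of_injective _ (hinj.comp e0.injective)
end

/-- For a finite rack with orbit representatives `xs o` and `D o` the minimal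
`D ≥ 2` with `ρ_{xs o}^D = id`, the subgroup `Z` of the structure group
generated by the `(xs o)^(D o)` is central and free abelian of rank the number
of orbits, and the quotient `G ⧸ Z` is finite. -/
theorem rack_group_finite_quotient {X : Type*} [Fintype X] (op : X → X → X)
    (hsd : ∀ x y z, op (op x y) z = op (op x z) (op y z))
    (hbij : ∀ y, Function.Bijective (fun x => op x y))
    (xs : Quotient (rackOrbitSetoid op) → X)
    (hxs : ∀ o, Quotient.mk (rackOrbitSetoid op) (xs o) = o)
    (D : Quotient (rackOrbitSetoid op) → ℕ)
    (hD : ∀ o, 2 ≤ D o ∧ (fun t => op t (xs o))^[D o] = id ∧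
      ∀ d, 2 ≤ d → (fun t => op t (xs o))^[d] = id → D o ≤ d)
    (Z : Subgroup (RackGroup op))
    (hZ : Z = Subgroup.closure
      {g | ∃ o, g = (PresentedGroup.of (xs o) : RackGroup op) ^ (D o)}) :
    Z ≤ Subgroup.center (RackGroup op) ∧
      Nonempty (Z ≃* Multiplicative (Quotient (rackOrbitSetoid op) →₀ ℤ)) ∧
      Finite (RackGroup op ⧸ Z) := by
  classical
  have hD2 : ∀ o, 2 ≤ D o := fun o => (hD o).1
  have hDpos : ∀ o, D o ≠ 0 := fun o => by have := hD2 o; omega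
  have hDit : ∀ o, (fun t => op t (xs o))^[D o] = id := fun o => (hD o).2.1
  -- the elements x_o ^ (D o) lie in the kernel of the permutation representation
  have hker : ∀ o, go op xs D o ∈ (piRep op hbij hsd).ker := fun o =>
    pow_mem_ker op hbij hsd (hDit o)
  have hc : ∀ o, go op xs D o ∈ Subgroup.center (RackGroup op) := fun o =>
    ker_piRep_le_center op hbij hsd (hker o)
  have hZle : Z ≤ Subgroup.center (RackGroup op) := by
    rw [hZ, Subgroup.closure_le]
    rintro g ⟨o, rfl⟩
    exact hc o
  refine ⟨hZle, ?_, ?_⟩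
  -- Z is free abelian on the orbits
  · have hrange : (psi op xs D hc).range = Z := by
      rw [psi_range, hZ]
    exact ⟨((MonoidHom.ofInjective
      (psi_injective op xs D hc hxs hDpos)).trans
        (MulEquiv.subgroupCongr hrange)).symm⟩
  -- the quotient is finite
  · set G := RackGroup op
    set K := (piRep op hbij hsd).ker with hK
    have hZK : Z ≤ K := by
      rw [hZ, Subgroup.closure_le]
      rintro g ⟨o, rfl⟩
      exact hker o
    haveI : Finite ((Equiv.Perm X)ᵐᵒᵖ) :=
      Finite.of_injective MulOpposite.unop (fun a b h => MulOpposite.unop_injective h)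
    haveI hGK : Finite (G ⧸ K) :=
      Finite.of_injective _ (QuotientGroup.kerLift_injective (piRep op hbij hsd))
    haveI : Finite (G ⧸ Subgroup.center G) := by
      have hle : K ≤ Subgroup.comap (MonoidHom.id G) (Subgroup.center G) := by
        simpa using ker_piRep_le_center op hbij hsd
      apply Finite.of_surjective
        (QuotientGroup.map K (Subgroup.center G) (MonoidHom.id G) hle)
      intro q
      obtain ⟨g, rfl⟩ := QuotientGroup.mk_surjective q
      exact ⟨QuotientGroup.mk g, by rw [QuotientGroup.map_mk]; rfl⟩
    haveI : Finite (commutatorSet G) := finite_commutatorSet_of_finite_quotient_center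
    haveI hCfin : Finite (commutator G) := inferInstance
    -- theta maps Z onto BSub
    have hmapZ : Subgroup.map (theta op) Z = BSub op D := by
      rw [hZ, MonoidHom.map_closure, BSub]
      congr 1
      ext g
      constructor
      · rintro ⟨h, ⟨o, rfl⟩, rfl⟩
        exact ⟨o, (theta_go op xs D hxs o).symm⟩
      · rintro ⟨o, rfl⟩
        exact ⟨go op xs D o, ⟨o, rfl⟩, theta_go op xs D hxs o⟩
    -- the second factor
    have hfinK : Finite (↥K ⧸ Z.subgroupOf K) := by
      set η := (QuotientGroup.mk' (BSub op D)).comp ((theta op).comp K.subtype) with hη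
      set N := η.ker with hN
      haveI : Finite (Multiplicative (Quotient (rackOrbitSetoid op) →₀ ℤ) ⧸ BSub op D) :=
        finite_quotient_BSub op D hD2
      haveI hKN : Finite (↥K ⧸ N) :=
        Finite.of_injective _ (QuotientGroup.kerLift_injective η)
      have hZ'N : Z.subgroupOf K ≤ N := by
        intro k hk
        rw [Subgroup.mem_subgroupOf] at hk
        rw [hN, MonoidHom.mem_ker, hη]
        simp only [MonoidHom.comp_apply, Subgroup.coe_subtype, QuotientGroup.mk'_apply]
        rw [QuotientGroup.eq_one_iff]
        rw [← hmapZ]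
        exact ⟨(k : G), hk, rfl⟩
      haveI hNfin : Finite (↥N ⧸ (Z.subgroupOf K).subgroupOf N) := by
        haveI : Finite ↥(commutator G ⊓ K) :=
          Finite.of_injective (Subgroup.inclusion inf_le_left)
            (Subgroup.inclusion_injective _)
        have hcn : ∀ c : ↥(commutator G ⊓ K), (⟨(c : G), c.2.2⟩ : ↥K) ∈ N := by
          intro c
          rw [hN, MonoidHom.mem_ker, hη]
          simp only [MonoidHom.comp_apply, Subgroup.coe_subtype, QuotientGroup.mk'_apply]
          have : theta op (c : G) = 1 := Abelianization.commutator_subset_ker (theta op) c.2.1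
          rw [this]
          simp
        apply Finite.of_surjective
          (fun c : ↥(commutator G ⊓ K) =>
            (QuotientGroup.mk ⟨⟨(c : G), c.2.2⟩, hcn c⟩ :
              ↥N ⧸ (Z.subgroupOf K).subgroupOf N))
        intro q
        obtain ⟨n, rfl⟩ := QuotientGroup.mk_surjective q
        have hnB : theta op ((n : ↥K) : G) ∈ BSub op D := by
          have h1 : η ((n : ↥K)) = 1 := n.2
          rw [hη] at h1
          simp only [MonoidHom.comp_apply, Subgroup.coe_subtype,
            QuotientGroup.mk'_apply] at h1
          rwa [QuotientGroup.eq_one_iff] at h1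
        rw [← hmapZ] at hnB
        obtain ⟨z, hzZ, hθz⟩ := hnB
        have hcC : ((n : ↥K) : G) * z⁻¹ ∈ commutator G := by
          apply ker_theta_le_commutator op xs hxs
          rw [MonoidHom.mem_ker, map_mul, map_inv, hθz]
          group
        have hcK : ((n : ↥K) : G) * z⁻¹ ∈ K := mul_mem (n : ↥K).2 (inv_mem (hZK hzZ))
        refine ⟨⟨((n : ↥K) : G) * z⁻¹, hcC, hcK⟩, ?_⟩
        rw [QuotientGroup.eq]
        rw [Subgroup.mem_subgroupOf, Subgroup.mem_subgroupOf]
        simp only [Subgroup.coe_mul, Subgroup.coe_inv]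
        have hval : ((((n : ↥K) : G) * z⁻¹)⁻¹ * ((n : ↥K) : G)) = z := by group
        rw [hval]
        exact hzZ
      exact Finite.of_equiv _ (Subgroup.quotientEquivProdOfLE hZ'N).symm
    exact Finite.of_equiv _ (Subgroup.quotientEquivProdOfLE hZK).symm
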